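/- Let e ≥ 3 and suppose d₂, d₃, …, d_e is a sequence of matrices over a graded polynomial ring with linear entries such that consecutive products vanish as symmetric tensors, and such that (in the case e = 2m+1 odd) d_{e+1−i} = ± d_iᵗ for 2 ≤ i ≤ m with d_{m+1}ᵗ = (−1)^m d_{m+1}, or (in the case e = 2m even) the middle factor φ satisfies φᵗ = (−1)^m φ and d_{e+1−i} = ± d_iᵗ for 2 ≤ i ≤ m. Then the wedge product D_{e−1} = d₂ ∧ d₃ ∧ ⋯ (with entries in ⋀^{e−2} of the space of linear forms) is skew-symmetric: D_{e−1}ᵗ = −D_{e−1}. -/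
import Mathlib


open ExteriorAlgebra TensorProduct

/-- The wedge composition `d₂ ∧ d₃ ∧ ⋯ ∧ d_{j+1}` of a chain of matrices with entries
in `V` (here `c i` is the matrix `d_{i+1}`, of size `n i × n (i+1)`), with entries in
the exterior algebra of `V`. -/
noncomputable def wedgeChain (k : Type*) [Field k] {V : Type*} [AddCommGroup V]
    [Module k V] (n : ℕ → ℕ) (c : ∀ i : ℕ, Fin (n i) → Fin (n (i + 1)) → V) :
    (j : ℕ) → Fin (n 1) → Fin (n (j + 1)) → ExteriorAlgebra k V
  | 0, a, b => if (a : ℕ) = (b : ℕ) then 1 else 0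
  | j + 1, a, b => ∑ l, wedgeChain k n c j a l * ExteriorAlgebra.ι k (c (j + 1) l b)

section Aux

variable (k : Type*) [Field k] {V : Type*} [AddCommGroup V] [Module k V]
  (n : ℕ → ℕ) (c : ∀ i : ℕ, Fin (n i) → Fin (n (i + 1)) → V)

/-- zero extension of the matrices to ℕ-indices -/
noncomputable def fext (i x y : ℕ) : V :=
  if h : x < n i ∧ y < n (i + 1) then c i ⟨x, h.1⟩ ⟨y, h.2⟩ else 0

lemma fext_zero_left (i x y : ℕ) (h : n i ≤ x) : fext n c i x y = 0 := by
  rw [fext, dif_neg (by omega)]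

lemma fext_zero_right (i x y : ℕ) (h : n (i + 1) ≤ y) : fext n c i x y = 0 := by
  rw [fext, dif_neg (by omega)]

/-- ℕ-indexed wedge chain of the matrices `c (s+1), …, c (s+t)`. -/
noncomputable def gchain (s : ℕ) : ℕ → ℕ → ℕ → ExteriorAlgebra k V
  | 0, x, y => if x = y then 1 else 0
  | t + 1, x, y => ∑ l ∈ Finset.range (n (s + t + 1)),
      gchain s t x l * ExteriorAlgebra.ι k (fext n c (s + t + 1) l y)

lemma ι_anticomm (x y : V) :
    ExteriorAlgebra.ι k x * ExteriorAlgebra.ι k y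
      = -(ExteriorAlgebra.ι k y * ExteriorAlgebra.ι k x) := by
  rw [eq_neg_iff_add_eq_zero]
  exact ExteriorAlgebra.ι_add_mul_swap (R := k) x y

lemma gchain_zero (s x y : ℕ) :
    gchain k n c s 0 x y = if x = y then 1 else 0 := rfl

lemma gchain_succ (s t x y : ℕ) :
    gchain k n c s (t + 1) x y
      = ∑ l ∈ Finset.range (n (s + t + 1)),
          gchain k n c s t x l * ExteriorAlgebra.ι k (fext n c (s + t + 1) l y) := rfl

lemma gchain_one (s x y : ℕ) :
    gchain k n c s 1 x y
      = if x < n (s + 1) then ExteriorAlgebra.ι k (fext n c (s + 1) x y) else 0 := by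
  rw [gchain_succ]
  simp only [gchain_zero, ite_mul, one_mul, zero_mul]
  rw [Finset.sum_ite_eq (Finset.range (n (s + 1))) x
    (fun l => ExteriorAlgebra.ι k (fext n c (s + 1) l y))]
  simp [Finset.mem_range]

lemma gchain_succ_left (t : ℕ) : ∀ (s x y : ℕ),
    gchain k n c s (t + 1) x y
      = ∑ l ∈ Finset.range (n (s + 2)),
          ExteriorAlgebra.ι k (fext n c (s + 1) x l) * gchain k n c (s + 1) t l y := by
  induction t with
  | zero =>
    intro s x y
    rw [gchain_one]
    simp only [gchain_zero, mul_ite, mul_one, mul_zero]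
    rw [Finset.sum_ite_eq' (Finset.range (n (s + 2))) y
      (fun l => ExteriorAlgebra.ι k (fext n c (s + 1) x l))]
    simp only [Finset.mem_range]
    by_cases hx : x < n (s + 1) <;> by_cases hy : y < n (s + 2)
    · simp [hx, hy]
    · rw [if_pos hx, if_neg hy,
        fext_zero_right n c (s + 1) x y (Nat.le_of_not_lt hy), map_zero]
    · rw [if_neg hx, if_pos hy,
        fext_zero_left n c (s + 1) x y (Nat.le_of_not_lt hx), map_zero]
    · rw [if_neg hx, if_neg hy]
  | succ t ih =>
    intro s x y
    rw [gchain_succ]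
    have h2 : ∀ l, gchain k n c (s + 1) (t + 1) l y
        = ∑ b ∈ Finset.range (n (s + t + 2)),
            gchain k n c (s + 1) t l b
              * ExteriorAlgebra.ι k (fext n c (s + t + 2) b y) := by
      intro l
      rw [gchain_succ, show s + 1 + t + 1 = s + t + 2 by omega]
    rw [show s + (t + 1) + 1 = s + t + 2 by omega]
    calc ∑ b ∈ Finset.range (n (s + t + 2)),
          gchain k n c s (t + 1) x b * ExteriorAlgebra.ι k (fext n c (s + t + 2) b y)
        = ∑ b ∈ Finset.range (n (s + t + 2)), ∑ l ∈ Finset.range (n (s + 2)),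
            ExteriorAlgebra.ι k (fext n c (s + 1) x l) * gchain k n c (s + 1) t l b
              * ExteriorAlgebra.ι k (fext n c (s + t + 2) b y) := by
          refine Finset.sum_congr rfl fun b _ => ?_
          rw [ih s x b, Finset.sum_mul]
      _ = ∑ l ∈ Finset.range (n (s + 2)),
            ExteriorAlgebra.ι k (fext n c (s + 1) x l) * gchain k n c (s + 1) (t + 1) l y := by
          rw [Finset.sum_comm]
          refine Finset.sum_congr rfl fun l _ => ?_
          rw [h2, Finset.mul_sum]
          exact Finset.sum_congr rfl fun b _ => by rw [mul_assoc]

lemma ι_mul_gchain (t : ℕ) : ∀ (s x y : ℕ) (v : V),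
    ExteriorAlgebra.ι k v * gchain k n c s t x y
      = ((-1 : ℤ) ^ t) • (gchain k n c s t x y * ExteriorAlgebra.ι k v) := by
  induction t with
  | zero =>
    intro s x y v
    rw [gchain_zero]
    split <;> simp
  | succ t ih =>
    intro s x y v
    rw [gchain_succ, Finset.mul_sum, Finset.sum_mul, Finset.smul_sum]
    refine Finset.sum_congr rfl fun l _ => ?_
    rw [← mul_assoc, ih s x l v, smul_mul_assoc, mul_assoc,
      ι_anticomm k v (fext n c (s + t + 1) l y), mul_neg, ← mul_assoc]
    simp [pow_succ, mul_smul]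

lemma gchain_mul_ι (t s x y : ℕ) (v : V) :
    gchain k n c s t x y * ExteriorAlgebra.ι k v
      = ((-1 : ℤ) ^ t) • (ExteriorAlgebra.ι k v * gchain k n c s t x y) := by
  rw [ι_mul_gchain, smul_smul, ← pow_add]
  rw [Even.neg_one_pow ⟨t, by omega⟩, one_smul]

lemma gchain_expand2 (s t x y : ℕ) :
    gchain k n c s (t + 2) x y
      = ∑ b ∈ Finset.range (n (s + t + 2)), ∑ a ∈ Finset.range (n (s + 2)),
          ExteriorAlgebra.ι k (fext n c (s + 1) x a) * gchain k n c (s + 1) t a b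
            * ExteriorAlgebra.ι k (fext n c (s + t + 2) b y) := by
  rw [gchain_succ, show s + (t + 1) + 1 = s + t + 2 by omega]
  refine Finset.sum_congr rfl fun b _ => ?_
  rw [gchain_succ_left, Finset.sum_mul]

lemma peel (s t : ℕ) (σ δ : ℤ) (hδ : δ = 1 ∨ δ = -1)
    (hσ : ∀ x y, gchain k n c (s + 1) t x y = σ • gchain k n c (s + 1) t y x)
    (hd : ∀ x y, fext n c (s + t + 2) x y = δ • fext n c (s + 1) y x)
    (hsize : n (s + 2) = n (s + t + 2)) (x y : ℕ) :
    gchain k n c s (t + 2) x y = (-σ) • gchain k n c s (t + 2) y x := by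
  have hδ2 : δ * δ = 1 := by rcases hδ with h | h <;> simp [h]
  have hd' : ∀ x y, fext n c (s + 1) x y = δ • fext n c (s + t + 2) y x := by
    intro x y; rw [hd y x, smul_smul, hδ2, one_smul]
  have key : ∀ a b : ℕ,
      ExteriorAlgebra.ι k (fext n c (s + 1) x a) * gchain k n c (s + 1) t a b
        * ExteriorAlgebra.ι k (fext n c (s + t + 2) b y)
      = (-σ) • (ExteriorAlgebra.ι k (fext n c (s + 1) y b) * gchain k n c (s + 1) t b a
        * ExteriorAlgebra.ι k (fext n c (s + t + 2) a x)) := by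
    intro a b
    rw [hd' x a, hd b y, hσ a b, map_zsmul, map_zsmul]
    set v1 := fext n c (s + t + 2) a x with hv1
    set v2 := fext n c (s + 1) y b with hv2
    set G := gchain k n c (s + 1) t b a with hG
    have swap : ExteriorAlgebra.ι k v1 * G * ExteriorAlgebra.ι k v2
        = -(ExteriorAlgebra.ι k v2 * G * ExteriorAlgebra.ι k v1) := by
      rw [ι_mul_gchain k n c t (s + 1) b a v1, smul_mul_assoc, mul_assoc,
        ι_anticomm k v1 v2, mul_neg, smul_neg, ← mul_assoc,
        gchain_mul_ι k n c t (s + 1) b a v2, smul_mul_assoc, smul_smul, ← pow_add,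
        Even.neg_one_pow ⟨t, by omega⟩, one_smul]
    calc (δ • ExteriorAlgebra.ι k v1) * (σ • G) * (δ • ExteriorAlgebra.ι k v2)
        = (δ * σ * δ) • (ExteriorAlgebra.ι k v1 * G * ExteriorAlgebra.ι k v2) := by
          simp only [smul_mul_assoc, mul_smul_comm, smul_smul]
          congr 1
          ring
      _ = σ • (ExteriorAlgebra.ι k v1 * G * ExteriorAlgebra.ι k v2) := by
          rw [show δ * σ * δ = σ * (δ * δ) by ring, hδ2, mul_one]
      _ = (-σ) • (ExteriorAlgebra.ι k v2 * G * ExteriorAlgebra.ι k v1) := by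
          rw [swap]; simp [neg_smul]
  rw [gchain_expand2, gchain_expand2, hsize]
  simp only [key, ← Finset.smul_sum]
  congr 1
  exact Finset.sum_comm

lemma iter (t : ℕ) (σ : ℤ) : ∀ (p s : ℕ),
    (∀ x y, gchain k n c (s + p) t x y = σ • gchain k n c (s + p) t y x) →
    (∀ q, q < p → ∃ δ : ℤ, (δ = 1 ∨ δ = -1) ∧
      (∀ x y, fext n c (s + q + (t + 2 * (p - 1 - q)) + 2) x y
        = δ • fext n c (s + q + 1) y x) ∧
      n (s + q + 2) = n (s + q + (t + 2 * (p - 1 - q)) + 2)) →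
    ∀ x y, gchain k n c s (t + 2 * p) x y
      = (((-1 : ℤ) ^ p) * σ) • gchain k n c s (t + 2 * p) y x := by
  intro p
  induction p with
  | zero =>
    intro s hb _ x y
    simpa using hb x y
  | succ p ih =>
    intro s hb hl x y
    have inner : ∀ x y, gchain k n c (s + 1) (t + 2 * p) x y
        = (((-1 : ℤ) ^ p) * σ) • gchain k n c (s + 1) (t + 2 * p) y x := by
      refine ih (s + 1) ?_ ?_
      · intro x y
        rw [show s + 1 + p = s + (p + 1) by omega]
        exact hb x y
      · intro q hq
        obtain ⟨δ, h1, h2, h3⟩ := hl (q + 1) (by omega)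
        refine ⟨δ, h1, ?_, ?_⟩
        · intro x y
          have e1 : s + 1 + q + (t + 2 * (p - 1 - q)) + 2
              = s + (q + 1) + (t + 2 * (p + 1 - 1 - (q + 1))) + 2 := by omega
          have e2 : s + 1 + q + 1 = s + (q + 1) + 1 := by omega
          rw [e1, e2]
          exact h2 x y
        · have e1 : s + 1 + q + (t + 2 * (p - 1 - q)) + 2
              = s + (q + 1) + (t + 2 * (p + 1 - 1 - (q + 1))) + 2 := by omega
          have e2 : s + 1 + q + 2 = s + (q + 1) + 2 := by omega
          rw [e1, e2]
          exact h3
    obtain ⟨δ, h1, h2, h3⟩ := hl 0 (by omega)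
    have hd : ∀ x y, fext n c (s + (t + 2 * p) + 2) x y = δ • fext n c (s + 1) y x := by
      intro x y
      have e1 : s + (t + 2 * p) + 2 = s + 0 + (t + 2 * (p + 1 - 1 - 0)) + 2 := by omega
      rw [e1]
      exact h2 x y
    have hsize : n (s + 2) = n (s + (t + 2 * p) + 2) := by
      have e1 : s + (t + 2 * p) + 2 = s + 0 + (t + 2 * (p + 1 - 1 - 0)) + 2 := by omega
      rw [e1]; exact h3
    have := peel k n c s (t + 2 * p) (((-1 : ℤ) ^ p) * σ) δ h1 inner hd hsize x y
    rw [show t + 2 * (p + 1) = t + 2 * p + 2 by omega]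
    rw [this]
    congr 1
    ring

lemma fdual_of (j i : ℕ) (δ : ℤ) (h1 : n j = n (i + 1)) (h2 : n (j + 1) = n i)
    (hrel : ∀ a b, c j a b = δ • c i (Fin.cast h2 b) (Fin.cast h1 a)) (x y : ℕ) :
    fext n c j x y = δ • fext n c i y x := by
  by_cases h : x < n j ∧ y < n (j + 1)
  · rw [fext, dif_pos h, hrel, fext, dif_pos ⟨by omega, by omega⟩]
    congr 1
  · rw [fext, dif_neg h, fext, dif_neg (by omega), smul_zero]

lemma wedge_eq_gchain : ∀ (j : ℕ) (a : Fin (n 1)) (b : Fin (n (j + 1))),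
    wedgeChain k n c j a b = gchain k n c 0 j (a : ℕ) (b : ℕ) := by
  intro j
  induction j with
  | zero => intro a b; rfl
  | succ j ih =>
    intro a b
    rw [wedgeChain, gchain_succ, show (0 : ℕ) + j + 1 = j + 1 by omega,
      ← Fin.sum_univ_eq_sum_range (fun l => gchain k n c 0 j (a : ℕ) l
        * ExteriorAlgebra.ι k (fext n c (j + 1) l (b : ℕ)))]
    refine Finset.sum_congr rfl fun l _ => ?_
    rw [ih a l, fext, dif_pos ⟨l.isLt, b.isLt⟩]

lemma mid_sym (s : ℕ) (εm msign : ℤ) (hms : msign = 1 ∨ msign = -1)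
    (φt : ℕ → ℕ → k)
    (hφ : ∀ x y, φt y x = ((msign : ℤ) : k) * φt x y)
    (hmid : ∀ x y, fext n c (s + 2) x y
      = εm • ∑ l ∈ Finset.range (n (s + 2)), φt x l • fext n c (s + 1) y l) :
    ∀ x y, gchain k n c s 2 x y = (-msign) • gchain k n c s 2 y x := by
  have hms2 : msign * msign = 1 := by rcases hms with h | h <;> simp [h]
  have hA : ∀ x y, gchain k n c s 2 x y
      = ∑ b ∈ Finset.range (n (s + 2)),
          ExteriorAlgebra.ι k (fext n c (s + 1) x b)
            * ExteriorAlgebra.ι k (fext n c (s + 2) b y) := by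
    intro x y
    rw [gchain_succ, show s + 1 + 1 = s + 2 by omega]
    refine Finset.sum_congr rfl fun b _ => ?_
    rw [gchain_one]
    by_cases hx : x < n (s + 1)
    · rw [if_pos hx]
    · rw [if_neg hx, zero_mul,
        fext_zero_left n c (s + 1) x b (Nat.le_of_not_lt hx), map_zero, zero_mul]
  have hGT : ∀ x y, gchain k n c s 2 x y
      = εm • ∑ b ∈ Finset.range (n (s + 2)), ∑ l ∈ Finset.range (n (s + 2)),
          φt b l • (ExteriorAlgebra.ι k (fext n c (s + 1) x b)
            * ExteriorAlgebra.ι k (fext n c (s + 1) y l)) := by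
    intro x y
    rw [hA, Finset.smul_sum]
    refine Finset.sum_congr rfl fun b _ => ?_
    rw [hmid b y, map_zsmul, map_sum, mul_smul_comm, Finset.mul_sum]
    congr 1
    refine Finset.sum_congr rfl fun l _ => ?_
    rw [map_smul, mul_smul_comm]
  have key : ∀ x y, (∑ b ∈ Finset.range (n (s + 2)), ∑ l ∈ Finset.range (n (s + 2)),
        φt b l • (ExteriorAlgebra.ι k (fext n c (s + 1) y b)
          * ExteriorAlgebra.ι k (fext n c (s + 1) x l)))
      = (-msign) • ∑ b ∈ Finset.range (n (s + 2)), ∑ l ∈ Finset.range (n (s + 2)),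
          φt b l • (ExteriorAlgebra.ι k (fext n c (s + 1) x b)
            * ExteriorAlgebra.ι k (fext n c (s + 1) y l)) := by
    intro x y
    rw [Finset.sum_comm]
    simp only [Finset.smul_sum]
    refine Finset.sum_congr rfl fun u _ => Finset.sum_congr rfl fun v _ => ?_
    rw [hφ u v, ι_anticomm k (fext n c (s + 1) y v) (fext n c (s + 1) x u),
      mul_smul, smul_neg, Int.cast_smul_eq_zsmul, neg_smul, smul_neg]
  intro x y
  rw [hGT x y, hGT y x, key, smul_smul, smul_smul]
  congr 1
  ring

end Aux

/-- Structure theorem for the highest linear syzygies (abstract form): given a chain of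
matrices `d₂, …, d_{e-1}` with linear entries (`c i = d_{i+1}`) such that consecutive
products vanish as symmetric tensors, whose sizes are symmetric (`n i = n (e-i)`), and
which is self-dual up to signs — with the middle matrix satisfying `d_{m+1}ᵗ = (−1)^m d_{m+1}`
when `e = 2m+1`, resp. with a middle `(−1)^m`-symmetric non-degenerate bilinear form `φ`
when `e = 2m` — the wedge product `D_{e-1} = d₂ ∧ ⋯ ∧ d_{e-1}` is skew-symmetric. -/


theorem highest_syzygy_matrix_skewSymmetric (k : Type*) [Field k] (V : Type*)
    [AddCommGroup V] [Module k V] (e m : ℕ) (he : 3 ≤ e) (n : ℕ → ℕ)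
    (c : ∀ i : ℕ, Fin (n i) → Fin (n (i + 1)) → V)
    (hn : ∀ i, i ≤ e → n i = n (e - i))
    (hsym : ∀ i, 1 ≤ i → i + 1 ≤ e - 2 → ∀ a b,
      (∑ l, (c i a l ⊗ₜ[k] c (i + 1) l b + c (i + 1) l b ⊗ₜ[k] c i a l)) = (0 : V ⊗[k] V))
    (ε : ℕ → ℤ) (hε : ∀ i, ε i = 1 ∨ ε i = -1)
    (hcase :
      (∃ _ : e = 2 * m + 1,
        (∀ i, 1 ≤ i → i ≤ e - 2 →
          ∀ (h1 : n (e - 1 - i) = n (i + 1)) (h2 : n (e - 1 - i + 1) = n i) a b,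
            c (e - 1 - i) a b = ε i • c i (Fin.cast h2 b) (Fin.cast h1 a)) ∧
          ε m = (-1 : ℤ) ^ m) ∨
      (∃ _ : e = 2 * m, ∃ φ : Matrix (Fin (n m)) (Fin (n m)) k,
        (∀ a b, φ b a = (-1 : k) ^ m * φ a b) ∧ IsUnit φ.det ∧
        (∀ i, 1 ≤ i → i ≤ m - 2 →
          ∀ (h1 : n (e - 1 - i) = n (i + 1)) (h2 : n (e - 1 - i + 1) = n i) a b,
            c (e - 1 - i) a b = ε i • c i (Fin.cast h2 b) (Fin.cast h1 a)) ∧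
        (∀ (h : n (m + 1) = n (m - 1)) (h' : n m = n (m - 1 + 1))
            (a : Fin (n m)) (b : Fin (n (m + 1))),
          c m a b = ε m • ∑ l, φ a l • c (m - 1) (Fin.cast h b) (Fin.cast h' l))))
    (hsq : n (e - 2 + 1) = n 1) :
    ∀ a b, wedgeChain k n c (e - 2) a b
      = - wedgeChain k n c (e - 2) (Fin.cast hsq b) (Fin.cast hsq.symm a) := by
  have main : ∀ x y : ℕ, gchain k n c 0 (e - 2) x y
      = (-1 : ℤ) • gchain k n c 0 (e - 2) y x := by
    rcases hcase with ⟨he2, hdual, hεm⟩ | ⟨he2, φ, hφsym, hφdet, hdual, hmid⟩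
    · -- odd case e = 2m+1
      have hm1 : 1 ≤ m := by omega
      have hnm : n (m + 1) = n m := by
        rw [hn (m + 1) (by omega), show e - (m + 1) = m by omega]
      have h1 : n (e - 1 - m) = n (m + 1) := by
        rw [show e - 1 - m = m by omega, hnm]
      have h2 : n (e - 1 - m + 1) = n m := by
        rw [show e - 1 - m + 1 = m + 1 by omega, hnm]
      have fmm : ∀ x y, fext n c m x y = ε m • fext n c m y x := by
        intro x y
        have hd := fdual_of n c (e - 1 - m) m (ε m) h1 h2
          (hdual m hm1 (by omega) h1 h2) x y
        rwa [show e - 1 - m = m by omega] at hd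
      have hb : ∀ x y, gchain k n c (0 + (m - 1)) 1 x y
          = ε m • gchain k n c (0 + (m - 1)) 1 y x := by
        intro x y
        rw [show 0 + (m - 1) = m - 1 by omega, gchain_one, gchain_one,
          show m - 1 + 1 = m by omega]
        by_cases hx : x < n m <;> by_cases hy : y < n m
        · rw [if_pos hx, if_pos hy, fmm x y, map_zsmul]
        · rw [if_pos hx, if_neg hy, fext_zero_right n c m x y (by omega),
            map_zero, smul_zero]
        · rw [if_neg hx, if_pos hy, fext_zero_right n c m y x (by omega),
            map_zero, smul_zero]
        · rw [if_neg hx, if_neg hy, smul_zero]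
      have hl : ∀ q, q < m - 1 → ∃ δ : ℤ, (δ = 1 ∨ δ = -1) ∧
          (∀ x y, fext n c (0 + q + (1 + 2 * (m - 1 - 1 - q)) + 2) x y
            = δ • fext n c (0 + q + 1) y x) ∧
          n (0 + q + 2) = n (0 + q + (1 + 2 * (m - 1 - 1 - q)) + 2) := by
        intro q hq
        have hA : 0 + q + (1 + 2 * (m - 1 - 1 - q)) + 2 = e - 1 - (q + 1) := by omega
        have h1q : n (e - 1 - (q + 1)) = n (q + 1 + 1) := by
          rw [hn (q + 1 + 1) (by omega), show e - (q + 1 + 1) = e - 1 - (q + 1) by omega]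
        have h2q : n (e - 1 - (q + 1) + 1) = n (q + 1) := by
          rw [show e - 1 - (q + 1) + 1 = e - (q + 1) by omega]
          exact (hn (q + 1) (by omega)).symm
        refine ⟨ε (q + 1), hε (q + 1), ?_, ?_⟩
        · intro x y
          rw [hA, show 0 + q + 1 = q + 1 by omega]
          exact fdual_of n c (e - 1 - (q + 1)) (q + 1) (ε (q + 1)) h1q h2q
            (hdual (q + 1) (by omega) (by omega) h1q h2q) x y
        · rw [hA, show 0 + q + 2 = q + 1 + 1 by omega]
          exact h1q.symm
      have S := iter k n c 1 (ε m) (m - 1) 0 hb hl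
      intro x y
      have Sxy := S x y
      rw [show 1 + 2 * (m - 1) = e - 2 by omega] at Sxy
      rw [Sxy]
      congr 1
      rw [hεm, ← pow_add]
      exact Odd.neg_one_pow ⟨m - 1, by omega⟩
    · -- even case e = 2m
      have hm2 : 2 ≤ m := by omega
      have hnm1 : n (m + 1) = n (m - 1) := by
        rw [hn (m + 1) (by omega), show e - (m + 1) = m - 1 by omega]
      have h' : n m = n (m - 1 + 1) := by rw [show m - 1 + 1 = m by omega]
      set φt : ℕ → ℕ → k :=
        fun x y => if h : x < n m ∧ y < n m then φ ⟨x, h.1⟩ ⟨y, h.2⟩ else 0 with hφt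
      have hφs : ∀ x y, φt y x = ((((-1 : ℤ) ^ m : ℤ)) : k) * φt x y := by
        intro x y
        push_cast
        by_cases h : x < n m ∧ y < n m
        · rw [hφt]
          simp only
          rw [dif_pos ⟨h.2, h.1⟩, dif_pos h]
          exact hφsym ⟨x, h.1⟩ ⟨y, h.2⟩
        · rw [hφt]
          simp only
          rw [dif_neg (by tauto), dif_neg h, mul_zero]
      have hmidf : ∀ x y, fext n c m x y
          = ε m • ∑ l ∈ Finset.range (n m), φt x l • fext n c (m - 1) y l := by
        intro x y
        by_cases hxy : x < n m ∧ y < n (m + 1)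
        · rw [fext, dif_pos hxy, hmid hnm1 h' ⟨x, hxy.1⟩ ⟨y, hxy.2⟩]
          congr 1
          rw [← Fin.sum_univ_eq_sum_range
            (fun l => φt x l • fext n c (m - 1) y l) (n m)]
          refine Finset.sum_congr rfl fun l _ => ?_
          rw [hφt]
          simp only
          rw [dif_pos ⟨hxy.1, l.isLt⟩, fext, dif_pos ⟨by omega, by omega⟩]
          rfl
        · rw [fext, dif_neg hxy]
          push_neg at hxy
          have hz : ∀ l ∈ Finset.range (n m), φt x l • fext n c (m - 1) y l = 0 := by
            intro l hl
            by_cases hx : x < n m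
            · have hy := hxy hx
              rw [fext_zero_left n c (m - 1) y l (by omega), smul_zero]
            · rw [hφt]
              simp only
              rw [dif_neg (by tauto), zero_smul]
          rw [Finset.sum_eq_zero hz, smul_zero]
      have hmid2 : ∀ x y, fext n c (m - 2 + 2) x y
          = ε m • ∑ l ∈ Finset.range (n (m - 2 + 2)),
              φt x l • fext n c (m - 2 + 1) y l := by
        intro x y
        rw [show m - 2 + 2 = m by omega, show m - 2 + 1 = m - 1 by omega]
        exact hmidf x y
      have hmsgn : ((-1 : ℤ) ^ m) = 1 ∨ ((-1 : ℤ) ^ m) = -1 := by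
        rcases Nat.even_or_odd m with h | h
        · exact Or.inl (Even.neg_one_pow h)
        · exact Or.inr (Odd.neg_one_pow h)
      have mids := mid_sym k n c (m - 2) (ε m) ((-1 : ℤ) ^ m) hmsgn φt hφs hmid2
      have hb : ∀ x y, gchain k n c (0 + (m - 2)) 2 x y
          = (-((-1 : ℤ) ^ m)) • gchain k n c (0 + (m - 2)) 2 y x := by
        intro x y
        rw [show 0 + (m - 2) = m - 2 by omega]
        exact mids x y
      have hl : ∀ q, q < m - 2 → ∃ δ : ℤ, (δ = 1 ∨ δ = -1) ∧
          (∀ x y, fext n c (0 + q + (2 + 2 * (m - 2 - 1 - q)) + 2) x y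
            = δ • fext n c (0 + q + 1) y x) ∧
          n (0 + q + 2) = n (0 + q + (2 + 2 * (m - 2 - 1 - q)) + 2) := by
        intro q hq
        have hA : 0 + q + (2 + 2 * (m - 2 - 1 - q)) + 2 = e - 1 - (q + 1) := by omega
        have h1q : n (e - 1 - (q + 1)) = n (q + 1 + 1) := by
          rw [hn (q + 1 + 1) (by omega), show e - (q + 1 + 1) = e - 1 - (q + 1) by omega]
        have h2q : n (e - 1 - (q + 1) + 1) = n (q + 1) := by
          rw [show e - 1 - (q + 1) + 1 = e - (q + 1) by omega]
          exact (hn (q + 1) (by omega)).symm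
        refine ⟨ε (q + 1), hε (q + 1), ?_, ?_⟩
        · intro x y
          rw [hA, show 0 + q + 1 = q + 1 by omega]
          exact fdual_of n c (e - 1 - (q + 1)) (q + 1) (ε (q + 1)) h1q h2q
            (hdual (q + 1) (by omega) (by omega) h1q h2q) x y
        · rw [hA, show 0 + q + 2 = q + 1 + 1 by omega]
          exact h1q.symm
      have S := iter k n c 2 (-((-1 : ℤ) ^ m)) (m - 2) 0 hb hl
      intro x y
      have Sxy := S x y
      rw [show 2 + 2 * (m - 2) = e - 2 by omega] at Sxy
      rw [Sxy]
      congr 1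
      rw [mul_neg, ← pow_add, Even.neg_one_pow (⟨m - 1, by omega⟩ : Even (m - 2 + m))]
  intro a b
  rw [wedge_eq_gchain k n c (e - 2) a b,
    wedge_eq_gchain k n c (e - 2) (Fin.cast hsq b) (Fin.cast hsq.symm a)]
  simp only [Fin.coe_cast]
  rw [main (a : ℕ) (b : ℕ), neg_one_zsmul]
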